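/- For any real symmetric n×n matrix A with 0 ⪯ A ⪯ I and any real numbers ρ₁, ρ₂: exp(A·ρ₁ + (I − A)·ρ₂) ⪯ A·exp(ρ₁) + (I − A)·exp(ρ₂), where the left side is the matrix exponential and the right side uses scalar exponentials. -/

import Mathlib

open Matrix

theorem stmt_5 (n : ℕ) (A : Matrix (Fin n) (Fin n) ℝ)
    (hAs : A.IsSymm) (hA0 : A.PosSemidef) (hA1 : ((1 : Matrix (Fin n) (Fin n) ℝ) - A).PosSemidef)
    (ρ₁ ρ₂ : ℝ) :
    (Real.exp ρ₁ • A + Real.exp ρ₂ • ((1 : Matrix (Fin n) (Fin n) ℝ) - A)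
      - NormedSpace.exp (ρ₁ • A + ρ₂ • ((1 : Matrix (Fin n) (Fin n) ℝ) - A))).PosSemidef := by
  have hA' : A.IsHermitian := hA0.1
  set V : Matrix (Fin n) (Fin n) ℝ := (hA'.eigenvectorUnitary : Matrix (Fin n) (Fin n) ℝ) with hV
  set lam : Fin n → ℝ := hA'.eigenvalues with hlam
  have hVs : star V * V = 1 := Unitary.coe_star_mul_self _
  have hVs' : V * star V = 1 := Unitary.coe_mul_star_self _
  have hVu : IsUnit V := ⟨⟨V, star V, hVs', hVs⟩, rfl⟩
  have hVinv : V⁻¹ = star V := inv_eq_left_inv hVs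
  have hAeq : A = V * diagonal lam * star V := by
    have := hA'.spectral_theorem
    simpa using this
  have h1 : (1 : Matrix (Fin n) (Fin n) ℝ) = V * diagonal (fun _ => (1:ℝ)) * star V := by
    simp [hVs']
  -- λ ∈ [0,1]
  have hl0 : ∀ i, 0 ≤ lam i := fun i => hA0.eigenvalues_nonneg i
  have hl1 : ∀ i, lam i ≤ 1 := by
    intro i
    have h := hA1.dotProduct_mulVec_nonneg (⇑(hA'.eigenvectorBasis i))
    rw [sub_mulVec, one_mulVec, hA'.mulVec_eigenvectorBasis] at h
    have hnorm : (star (⇑(hA'.eigenvectorBasis i)) ⬝ᵥ ⇑(hA'.eigenvectorBasis i)) = 1 := by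
      have h1 := hA'.eigenvectorBasis.orthonormal.1 i
      have : (inner ℝ (hA'.eigenvectorBasis i) (hA'.eigenvectorBasis i) : ℝ) = 1 := by
        rw [real_inner_self_eq_norm_sq, h1]; norm_num
      rw [← this, EuclideanSpace.inner_eq_star_dotProduct, dotProduct_comm]
    rw [dotProduct_sub, dotProduct_smul, hnorm] at h
    simp at h
    linarith
  set f : Fin n → ℝ := fun i => ρ₁ * lam i + ρ₂ * (1 - lam i) with hf
  set g : Fin n → ℝ := fun i =>
    Real.exp ρ₁ * lam i + Real.exp ρ₂ * (1 - lam i) - Real.exp (f i) with hg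
  have hdiag1 : (ρ₁ • diagonal lam + ρ₂ • (diagonal (fun _ => (1:ℝ)) - diagonal lam))
      = diagonal f := by
    ext i j
    by_cases h : i = j <;> simp [h, diagonal, hf]
  have e1 : ρ₁ • A + ρ₂ • ((1 : Matrix (Fin n) (Fin n) ℝ) - A) = V * diagonal f * star V := by
    conv_lhs => rw [hAeq, h1]
    rw [← hdiag1]
    simp only [Matrix.mul_add, Matrix.add_mul, Matrix.mul_sub, Matrix.sub_mul,
      mul_smul_comm, smul_mul_assoc]
  have hexp : NormedSpace.exp (ρ₁ • A + ρ₂ • ((1 : Matrix (Fin n) (Fin n) ℝ) - A))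
      = V * diagonal (fun i => Real.exp (f i)) * star V := by
    rw [e1, ← hVinv, Matrix.exp_conj V (diagonal f) hVu, Matrix.exp_diagonal]
    rw [hVinv]
    congr 2
    funext i
    rw [Pi.exp_def]
    simp [Real.exp_eq_exp_ℝ]
  have e2 : Real.exp ρ₁ • A + Real.exp ρ₂ • ((1 : Matrix (Fin n) (Fin n) ℝ) - A)
      - NormedSpace.exp (ρ₁ • A + ρ₂ • ((1 : Matrix (Fin n) (Fin n) ℝ) - A))
      = V * diagonal g * star V := by
    rw [hexp]
    conv_lhs => rw [hAeq, h1]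
    have hdiag2 : (Real.exp ρ₁ • diagonal lam
        + Real.exp ρ₂ • (diagonal (fun _ => (1:ℝ)) - diagonal lam)
        - diagonal (fun i => Real.exp (f i))) = diagonal g := by
      ext i j
      by_cases h : i = j <;> simp [h, diagonal, hg]
    rw [← hdiag2]
    simp only [Matrix.mul_add, Matrix.add_mul, Matrix.mul_sub, Matrix.sub_mul,
      mul_smul_comm, smul_mul_assoc]
  rw [e2]
  have hgpos : ∀ i, 0 ≤ g i := by
    intro i
    have hcvx := convexOn_exp.2 (Set.mem_univ ρ₁) (Set.mem_univ ρ₂) (hl0 i)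
      (sub_nonneg.mpr (hl1 i)) (by ring : lam i + (1 - lam i) = 1)
    simp only [smul_eq_mul] at hcvx
    have : f i = lam i * ρ₁ + (1 - lam i) * ρ₂ := by rw [hf]; ring
    simp only [hg, this]
    linarith [hcvx]
  have := (Matrix.posSemidef_diagonal_iff.mpr hgpos).mul_mul_conjTranspose_same V
  simpa [Matrix.star_eq_conjTranspose] using this
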